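/- Let G be a finitely generated group of super-linear growth, with word length |·|_G, balls B_G(r), and right-invariant word metric d_G. Then there is a finite constant c with the following property: for any real r ≥ 1, any nonempty connected (1,r)-Følner set F ⊆ G, and any nonempty subset A ⊆ F, there is a pair (V,E) with V ⊆ G finite, every point of A within d_G-distance 4r of V, (V,E) a connected graph, and wt_{d_G}(V,E) ≤ c|F|/r. -/

import Mathlib

open Filter
open scoped Pointwise

/-- The word length of `g` with respect to the generating set `S`. -/
noncomputable def wordLength {G : Type*} [Group G] (S : Set G) (g : G) : ℕ :=
  sInf {n | ∃ l : List G, l.length = n ∧ (∀ s ∈ l, s ∈ S) ∧ l.prod = g}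

/-- The right-invariant word metric `d_G(g,h) = |g h⁻¹|_G`. -/
noncomputable def wordDist {G : Type*} [Group G] (S : Set G) (g h : G) : ℕ :=
  wordLength S (g * h⁻¹)

/-- The ball `B_G(r) = {g : |g|_G ≤ r}`. -/
def wordBall {G : Type*} [Group G] (S : Set G) (r : ℝ) : Set G :=
  {g : G | (wordLength S g : ℝ) ≤ r}

/-- `F` is an (ε,r)-Følner set: finite, nonempty, with `|(B_G(r)·F) \ F| ≤ ε|F|`. -/
def IsFolner {G : Type*} [Group G] (S : Set G) (ε r : ℝ) (F : Set G) : Prop :=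
  F.Finite ∧ F.Nonempty ∧
    (((wordBall S r * F) \ F).ncard : ℝ) ≤ ε * (F.ncard : ℝ)

/-- `E` is r-connected for the word metric. -/
def RConnected {G : Type*} [Group G] (S : Set G) (r : ℝ) (E : Set G) : Prop :=
  ∀ g ∈ E, ∀ h ∈ E, Relation.ReflTransGen
    (fun a b => a ∈ E ∧ b ∈ E ∧ (wordDist S a b : ℝ) ≤ r) g h

/-- One step along an (undirected) edge of the graph with edge set `E`. -/
def edgeStep {Z : Type*} (E : Finset (Z × Z)) (a b : Z) : Prop :=
  (a, b) ∈ E ∨ (b, a) ∈ E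

section WL
variable {G : Type*} [Group G] {S : Set G}
  (hSsym : ∀ s ∈ S, s⁻¹ ∈ S) (hSgen : Subgroup.closure S = ⊤)
include hSsym hSgen

theorem exists_rep (g : G) :
    ∃ l : List G, (∀ s ∈ l, s ∈ S) ∧ l.prod = g := by
  have hg : g ∈ Subgroup.closure S := by rw [hSgen]; trivial
  induction hg using Subgroup.closure_induction with
  | mem x hx => exact ⟨[x], by simp [hx]⟩
  | one => exact ⟨[], by simp⟩
  | mul x y _ _ hx hy =>
    obtain ⟨l1, h1, e1⟩ := hx
    obtain ⟨l2, h2, e2⟩ := hy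
    exact ⟨l1 ++ l2, by
      constructor
      · intro s hs; rcases List.mem_append.1 hs with h | h
        exacts [h1 s h, h2 s h]
      · simp [e1, e2]⟩
  | inv x _ hx =>
    obtain ⟨l, h1, e1⟩ := hx
    refine ⟨(l.map (·⁻¹)).reverse, ?_, ?_⟩
    · intro s hs
      simp only [List.mem_reverse, List.mem_map] at hs
      obtain ⟨a, ha, rfl⟩ := hs
      exact hSsym a (h1 a ha)
    · rw [List.prod_reverse_noncomm, List.map_map]
      simp [e1]

omit hSsym hSgen in
theorem wl_le {g : G} {l : List G} (hl : ∀ s ∈ l, s ∈ S) (hp : l.prod = g) :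
    wordLength S g ≤ l.length :=
  Nat.sInf_le ⟨l, rfl, hl, hp⟩

theorem wl_spec (g : G) :
    ∃ l : List G, l.length = wordLength S g ∧ (∀ s ∈ l, s ∈ S) ∧ l.prod = g := by
  have hne : {n | ∃ l : List G, l.length = n ∧ (∀ s ∈ l, s ∈ S) ∧ l.prod = g}.Nonempty := by
    obtain ⟨l, h1, h2⟩ := exists_rep hSsym hSgen g
    exact ⟨l.length, l, rfl, h1, h2⟩
  exact Nat.sInf_mem hne

omit hSsym hSgen in
@[simp] theorem wl_one : wordLength S (1 : G) = 0 :=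
  Nat.le_zero.1 (wl_le (l := []) (by simp) (by simp))

theorem wl_eq_zero {g : G} (h : wordLength S g = 0) : g = 1 := by
  obtain ⟨l, e, _, p⟩ := wl_spec hSsym hSgen g
  rw [h, List.length_eq_zero_iff] at e
  rw [← p, e]; simp

theorem wl_mul_le (g h : G) :
    wordLength S (g * h) ≤ wordLength S g + wordLength S h := by
  obtain ⟨l1, e1, m1, p1⟩ := wl_spec hSsym hSgen g
  obtain ⟨l2, e2, m2, p2⟩ := wl_spec hSsym hSgen h
  have := wl_le (S := S) (g := g * h) (l := l1 ++ l2)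
    (by intro s hs; rcases List.mem_append.1 hs with h' | h'; exacts [m1 s h', m2 s h'])
    (by simp [p1, p2])
  simpa [← e1, ← e2] using this

theorem wl_inv_le (g : G) : wordLength S g⁻¹ ≤ wordLength S g := by
  obtain ⟨l, e, m, p⟩ := wl_spec hSsym hSgen g
  have := wl_le (S := S) (g := g⁻¹) (l := (l.map (·⁻¹)).reverse)
    (by
      intro s hs
      simp only [List.mem_reverse, List.mem_map] at hs
      obtain ⟨a, ha, rfl⟩ := hs
      exact hSsym a (m a ha))
    (by rw [List.prod_reverse_noncomm, List.map_map]; simp [p])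
  simpa [← e] using this

theorem wl_inv (g : G) : wordLength S g⁻¹ = wordLength S g := by
  refine le_antisymm (wl_inv_le hSsym hSgen g) ?_
  have := wl_inv_le hSsym hSgen g⁻¹
  simpa using this

omit hSsym hSgen in
theorem wd_self (g : G) : wordDist S g g = 0 := by simp [wordDist]

theorem wd_comm (g h : G) : wordDist S g h = wordDist S h g := by
  rw [wordDist, wordDist, ← wl_inv hSsym hSgen (g * h⁻¹)]
  simp

theorem wd_triangle (g h k : G) :
    wordDist S g k ≤ wordDist S g h + wordDist S h k := by
  have : g * k⁻¹ = (g * h⁻¹) * (h * k⁻¹) := by group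
  rw [wordDist, this]
  exact wl_mul_le hSsym hSgen _ _

omit hSsym hSgen in
/-- finiteness of the set of words of given length -/
theorem finite_words (hS : S.Finite) (n : ℕ) :
    {l : List G | l.length = n ∧ ∀ s ∈ l, s ∈ S}.Finite := by
  induction n with
  | zero =>
    apply Set.Finite.subset (Set.finite_singleton ([] : List G))
    rintro l ⟨hl, -⟩
    simp [List.length_eq_zero_iff.1 hl]
  | succ n ih =>
    have : {l : List G | l.length = n + 1 ∧ ∀ s ∈ l, s ∈ S} ⊆
        (fun p : G × List G => p.1 :: p.2) '' (S ×ˢ {l : List G | l.length = n ∧ ∀ s ∈ l, s ∈ S}) := by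
      rintro l ⟨hl, hm⟩
      cases l with
      | nil => simp at hl
      | cons a t =>
        refine ⟨(a, t), ⟨hm a (by simp), ?_, ?_⟩, rfl⟩
        · simpa using hl
        · intro s hs; exact hm s (by simp [hs])
    exact Set.Finite.subset (Set.Finite.image _ (hS.prod ih)) this

theorem ball_finite (hS : S.Finite) (n : ℕ) : {g : G | wordLength S g ≤ n}.Finite := by
  have : {g : G | wordLength S g ≤ n} ⊆
      ⋃ j ∈ Finset.range (n + 1), List.prod '' {l : List G | l.length = j ∧ ∀ s ∈ l, s ∈ S} := by
    intro g hg
    obtain ⟨l, e, m, p⟩ := wl_spec hSsym hSgen g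
    simp only [Set.mem_iUnion]
    refine ⟨l.length, ?_, l, ⟨rfl, m⟩, p⟩
    simp only [Finset.mem_range]
    have : wordLength S g ≤ n := hg
    omega
  exact Set.Finite.subset (Set.Finite.biUnion (Finset.range (n+1)).finite_toSet
    (fun j _ => Set.Finite.image _ (finite_words hS j))) this

omit hSsym hSgen in
theorem wordBall_eq (r : ℝ) (hr : 0 ≤ r) :
    wordBall S r = {g : G | wordLength S g ≤ ⌊r⌋₊} := by
  ext g
  simp only [wordBall, Set.mem_setOf_eq]
  rw [Nat.le_floor_iff hr]

end WL

section Geo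
variable {G : Type*} [Group G] {S : Set G}
  (hSsym : ∀ s ∈ S, s⁻¹ ∈ S) (hSgen : Subgroup.closure S = ⊤)
include hSsym hSgen

/-- prefixes of geodesics are geodesic. -/
theorem geodesic_prefix {l : List G} (hm : ∀ s ∈ l, s ∈ S)
    (hlen : l.length = wordLength S l.prod) {b : ℕ} (hb : b ≤ l.length) :
    wordLength S ((l.take b).prod) = b := by
  have h1 : wordLength S ((l.take b).prod) ≤ b := by
    have := wl_le (S := S) (l := l.take b) (fun s hs => hm s (List.mem_of_mem_take hs)) rfl
    rwa [List.length_take, min_eq_left hb] at this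
  have h2 : wordLength S ((l.drop b).prod) ≤ l.length - b := by
    have := wl_le (S := S) (l := l.drop b) (fun s hs => hm s (List.mem_of_mem_drop hs)) rfl
    rwa [List.length_drop] at this
  have h3 : l.prod = (l.take b).prod * (l.drop b).prod := by
    rw [← List.prod_append, List.take_append_drop]
  have h4 := wl_mul_le hSsym hSgen ((l.take b).prod) ((l.drop b).prod)
  rw [← h3, ← hlen] at h4
  omega

theorem exists_wl_eq (hS : S.Finite) (hinf : Infinite G) (n : ℕ) :
    ∃ g : G, wordLength S g = n := by
  have hfin := ball_finite hSsym hSgen hS n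
  have : {g : G | wordLength S g ≤ n} ≠ Set.univ := by
    intro h
    exact Set.infinite_univ (α := G) (h ▸ hfin)
  obtain ⟨g, hg⟩ : ∃ g : G, ¬ wordLength S g ≤ n := by
    by_contra hc
    push_neg at hc
    exact this (Set.eq_univ_of_forall hc)
  obtain ⟨l, e, m, p⟩ := wl_spec hSsym hSgen g
  refine ⟨(l.take n).prod, geodesic_prefix hSsym hSgen m (by rw [p, ← e]) ?_⟩
  omega

end Geo

section NF
variable {G : Type*} [Group G]

/-- candidate first letters of geodesics of `g` -/
def selT (S : Set G) (g : G) : Set G :=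
  {s | s ∈ S ∧ wordLength S (s⁻¹ * g) + 1 = wordLength S g}

open Classical in
noncomputable def sel (S : Set G) (f : G → ℕ) (g : G) : G :=
  if h : ∃ a ∈ selT S g, ∀ b ∈ selT S g, f a ≤ f b then Classical.choose h else 1

variable {S : Set G} {f : G → ℕ}
variable (hS : S.Finite) (hSsym : ∀ s ∈ S, s⁻¹ ∈ S) (hSgen : Subgroup.closure S = ⊤)

include hS hSsym hSgen in
theorem selT_exists {g : G} (hg : wordLength S g ≠ 0) :
    ∃ a ∈ selT S g, ∀ b ∈ selT S g, f a ≤ f b := by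
  have hne : (selT S g).Nonempty := by
    obtain ⟨l, e, m, p⟩ := wl_spec hSsym hSgen g
    cases l with
    | nil => simp at e; exact absurd e.symm hg
    | cons s t =>
      have h1 : wordLength S (s⁻¹ * g) ≤ t.length := by
        apply wl_le (fun x hx => m x (by simp [hx]))
        rw [← p]; simp
      have h2 : wordLength S g ≤ 1 + wordLength S (s⁻¹ * g) := by
        have := wl_mul_le hSsym hSgen s (s⁻¹ * g)
        have hs1 : wordLength S s ≤ 1 := by
          simpa using wl_le (S := S) (l := [s]) (by simp [m s (by simp)]) (by simp)
        simp only [mul_inv_cancel_left] at this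
        omega
      have h3 : t.length + 1 = wordLength S g := by simpa using e
      exact ⟨s, m s (by simp), by omega⟩
  exact Set.exists_min_image (selT S g) f (hS.subset (fun x hx => hx.1)) hne

include hS hSsym hSgen in
theorem sel_spec {g : G} (hg : wordLength S g ≠ 0) :
    sel S f g ∈ selT S g ∧ ∀ b ∈ selT S g, f (sel S f g) ≤ f b := by
  have h := selT_exists (f := f) hS hSsym hSgen hg
  rw [sel, dif_pos h]
  exact ⟨(Classical.choose_spec h).1, (Classical.choose_spec h).2⟩

noncomputable def NF (S : Set G) (f : G → ℕ) (hS : S.Finite)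
    (hSsym : ∀ s ∈ S, s⁻¹ ∈ S) (hSgen : Subgroup.closure S = ⊤) (g : G) : List G :=
  if h : wordLength S g = 0 then [] else
    sel S f g :: NF S f hS hSsym hSgen ((sel S f g)⁻¹ * g)
termination_by wordLength S g
decreasing_by
  have := (sel_spec (f := f) hS hSsym hSgen h).1.2
  omega

theorem NF_zero (hS : S.Finite) (hSsym : ∀ s ∈ S, s⁻¹ ∈ S) (hSgen : Subgroup.closure S = ⊤)
    {g : G} (h : wordLength S g = 0) : NF S f hS hSsym hSgen g = [] := by
  rw [NF, dif_pos h]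

theorem NF_cons (hS : S.Finite) (hSsym : ∀ s ∈ S, s⁻¹ ∈ S) (hSgen : Subgroup.closure S = ⊤)
    {g : G} (h : wordLength S g ≠ 0) :
    NF S f hS hSsym hSgen g = sel S f g :: NF S f hS hSsym hSgen ((sel S f g)⁻¹ * g) := by
  rw [NF, dif_neg h]

theorem NF_spec (g : G) :
    (NF S f hS hSsym hSgen g).length = wordLength S g ∧
      (∀ s ∈ NF S f hS hSsym hSgen g, s ∈ S) ∧ (NF S f hS hSsym hSgen g).prod = g := by
  generalize hn : wordLength S g = n
  induction n using Nat.strong_induction_on generalizing g with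
  | _ n ih =>
    by_cases h : wordLength S g = 0
    · rw [NF_zero hS hSsym hSgen h]
      exact ⟨by simp [← hn, h], by simp, (wl_eq_zero hSsym hSgen h).symm⟩
    · obtain ⟨hsel, -⟩ := sel_spec (f := f) hS hSsym hSgen h
      have hlt : wordLength S ((sel S f g)⁻¹ * g) < n := by
        have := hsel.2; omega
      obtain ⟨ih1, ih2, ih3⟩ := ih _ hlt ((sel S f g)⁻¹ * g) rfl
      rw [NF_cons hS hSsym hSgen h]
      refine ⟨?_, ?_, ?_⟩
      · simp only [List.length_cons, ih1]
        have := hsel.2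
        omega
      · intro s hs
        rcases List.mem_cons.1 hs with rfl | hs
        exacts [hsel.1, ih2 s hs]
      · simp [ih3]

end NF

section Factor
variable {G : Type*} [Group G] {S : Set G} {f : G → ℕ}
variable (hS : S.Finite) (hSsym : ∀ s ∈ S, s⁻¹ ∈ S) (hSgen : Subgroup.closure S = ⊤)
  (hf : Set.InjOn f S)

@[simp] theorem NF_one : NF S f hS hSsym hSgen (1 : G) = [] :=
  NF_zero hS hSsym hSgen (by simp)

include hf in
theorem NF_take (g : G) (b : ℕ) :
    (NF S f hS hSsym hSgen g).take b =
      NF S f hS hSsym hSgen (((NF S f hS hSsym hSgen g).take b).prod) := by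
  generalize hn : wordLength S g = n
  induction n using Nat.strong_induction_on generalizing g b with
  | _ n ih =>
    by_cases h : wordLength S g = 0
    · rw [NF_zero hS hSsym hSgen h]
      simp
    · rw [NF_cons hS hSsym hSgen h]
      set s := sel S f g with hs
      set g' := s⁻¹ * g with hg'
      set w' := NF S f hS hSsym hSgen g' with hw'
      obtain ⟨hsel, hmin⟩ := sel_spec (f := f) hS hSsym hSgen h
      have hlen' : wordLength S g' + 1 = wordLength S g := hsel.2
      obtain ⟨hl1, hl2, hl3⟩ := NF_spec (f := f) hS hSsym hSgen g'
      rw [← hw'] at hl1 hl2 hl3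
      have hsg : s * g' = g := by rw [hg']; group
      cases b with
      | zero => simp
      | succ b' =>
        rw [List.take_succ_cons]
        have ihb : w'.take b' = NF S f hS hSsym hSgen ((w'.take b').prod) := by
          exact ih (wordLength S g') (by omega) g' b' rfl
        by_cases hb : wordLength S g' ≤ b'
        · rw [List.take_of_length_le (by omega)]
          rw [List.prod_cons, hl3, hsg]
          rw [NF_cons hS hSsym hSgen h, ← hs, ← hg', ← hw']
        · push_neg at hb
          set h' := (w'.take b').prod with hh'
          have hwlh' : wordLength S h' = b' := by
            have := geodesic_prefix hSsym hSgen hl2 (by rw [hl3]; exact hl1) (b := b') (by omega)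
            rwa [← hh'] at this
          set t := (w'.drop b').prod with ht
          have hwlt : wordLength S t ≤ wordLength S g' - b' := by
            have := wl_le (S := S) (l := w'.drop b')
              (fun x hx => hl2 x (List.mem_of_mem_drop hx)) rfl
            rw [← ht, List.length_drop, hl1] at this
            exact this
          have hght : g' = h' * t := by
            rw [hh', ht, ← List.prod_append, List.take_append_drop, hl3]
          have hs1 : wordLength S s ≤ 1 := by
            simpa using wl_le (S := S) (l := [s]) (by intro x hx; simp at hx; rw [hx]; exact hsel.1) (by simp)
          have claim1 : wordLength S (s * h') = b' + 1 := by
            have hle : wordLength S (s * h') ≤ 1 + b' := by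
              have := wl_mul_le hSsym hSgen s h'
              omega
            have hge : wordLength S g ≤ wordLength S (s * h') + wordLength S t := by
              have := wl_mul_le hSsym hSgen (s * h') t
              rw [mul_assoc, ← hght, hsg] at this
              exact this
            omega
          have hne2 : wordLength S (s * h') ≠ 0 := by omega
          have claim2 : sel S f (s * h') = s := by
            obtain ⟨hsel2, hmin2⟩ := sel_spec (f := f) hS hSsym hSgen hne2
            have hsmem : s ∈ selT S (s * h') := by
              refine ⟨hsel.1, ?_⟩
              rw [inv_mul_cancel_left, hwlh', claim1]
            have h1 : f (sel S f (s * h')) ≤ f s := hmin2 s hsmem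
            have h2 : f s ≤ f (sel S f (s * h')) := by
              apply hmin
              obtain ⟨hu1, hu2⟩ := hsel2
              set u := sel S f (s * h')
              refine ⟨hu1, ?_⟩
              have hu3 : wordLength S (u⁻¹ * (s * h')) = b' := by omega
              have e1 : u⁻¹ * g = (u⁻¹ * (s * h')) * t := by
                rw [mul_assoc, mul_assoc, ← hght, hsg]
              have hle : wordLength S (u⁻¹ * g) ≤ wordLength S g' := by
                rw [e1]
                have := wl_mul_le hSsym hSgen (u⁻¹ * (s * h')) t
                omega
              have hu4 : wordLength S u ≤ 1 := by
                simpa using wl_le (S := S) (l := [u]) (by simp [hu1]) (by simp)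
              have hge : wordLength S g ≤ wordLength S u + wordLength S (u⁻¹ * g) := by
                have := wl_mul_le hSsym hSgen u (u⁻¹ * g)
                rw [mul_inv_cancel_left] at this
                exact this
              omega
            exact hf hsel2.1 hsel.1 (le_antisymm h1 h2)
          rw [List.prod_cons, ← hh', NF_cons hS hSsym hSgen hne2, claim2,
            inv_mul_cancel_left, ← ihb]

theorem NF_drop (g : G) (a : ℕ) :
    (NF S f hS hSsym hSgen g).drop a =
      NF S f hS hSsym hSgen (((NF S f hS hSsym hSgen g).drop a).prod) := by
  generalize hn : wordLength S g = n
  induction n using Nat.strong_induction_on generalizing g a with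
  | _ n ih =>
    by_cases h : wordLength S g = 0
    · rw [NF_zero hS hSsym hSgen h]; simp
    · obtain ⟨hsel, hmin⟩ := sel_spec (f := f) hS hSsym hSgen h
      obtain ⟨hl1, hl2, hl3⟩ := NF_spec (f := f) hS hSsym hSgen g
      cases a with
      | zero => rw [List.drop_zero, hl3]
      | succ a' =>
        rw [NF_cons hS hSsym hSgen h, List.drop_succ_cons]
        exact ih (wordLength S ((sel S f g)⁻¹ * g)) (by have := hsel.2; omega) _ a' rfl

end Factor

section Periods
variable {α : Type*}

/-- `v` has period `e` on the interval `[a, b)`. -/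
def Per (v : ℕ → α) (a b e : ℕ) : Prop := ∀ i, a ≤ i → i + e < b → v i = v (i + e)

theorem Per.mono {v : ℕ → α} {a b e a' b' : ℕ} (h : Per v a b e)
    (ha : a ≤ a') (hb : b' ≤ b) : Per v a' b' e :=
  fun i hi he => h i (ha.trans hi) (lt_of_lt_of_le he hb)

theorem per_merge {v : ℕ → α} {x a b c gp e : ℕ} (hxa : x ≤ a) (hab : a + gp + e ≤ b)
    (hbc : b ≤ c) (he : 1 ≤ e) (h1 : Per v x b gp) (h2 : Per v a c e) :
    Per v x c gp := by
  have claim : ∀ i, a ≤ i → i + gp < c → v i = v (i + gp) := by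
    intro i
    induction i using Nat.strong_induction_on with
    | _ i ih =>
      intro hai higp
      by_cases hib : i + gp < b
      · exact h1 i (hxa.trans hai) hib
      · push_neg at hib
        have hi1 : a + e ≤ i := by omega
        have e1 : v (i - e) = v i := by
          have := h2 (i - e) (by omega) (by omega)
          rwa [Nat.sub_add_cancel (by omega)] at this
        have e2 : v (i - e + gp) = v (i + gp) := by
          have := h2 (i - e + gp) (by omega) (by omega)
          rwa [show i - e + gp + e = i + gp by omega] at this
        have e3 : v (i - e) = v (i - e + gp) := ih (i - e) (by omega) (by omega) (by omega)
        rw [← e1, ← e2, e3]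
  intro i hxi higp
  by_cases hib : i + gp < b
  · exact h1 i hxi hib
  · exact claim i (by omega) higp

theorem per_glue {v : ℕ → α} {m k n e₀ : ℕ} (hkm : 3 * m + 1 ≤ k) (hm : 1 ≤ m)
    (hkn : k + m ≤ n)
    (window : ∀ i, i + k + m ≤ n → ∃ e, 1 ≤ e ∧ e ≤ m ∧ Per v (i + m) (i + k) e)
    (h0 : 1 ≤ e₀) (hem : e₀ ≤ m) (hper0 : Per v m k e₀) :
    Per v m (n - m) e₀ := by
  have main : ∀ j, j + k + m ≤ n → ∃ b, j + k ≤ b ∧ b ≤ n ∧ Per v m b e₀ := by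
    intro j
    induction j with
    | zero => intro _; exact ⟨k, by omega, by omega, hper0⟩
    | succ j ihj =>
      intro hj
      obtain ⟨b, hb1, hb2, hper⟩ := ihj (by omega)
      obtain ⟨e, he1, he2, hwin⟩ := window (j + 1) hj
      by_cases hbig : j + 1 + k ≤ b
      · exact ⟨b, hbig, hb2, hper⟩
      · push_neg at hbig
        refine ⟨j + 1 + k, le_refl _, by omega, ?_⟩
        exact per_merge (x := m) (a := j + 1 + m) (by omega) (by omega) (by omega) he1
          hper hwin
  obtain ⟨b, hb1, hb2, hper⟩ := main (n - k - m) (by omega)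
  exact hper.mono (le_refl _) (by omega)

theorem per_encode {v₁ v₂ : ℕ → α} {n m e₁ e₂ : ℕ} (hm : 1 ≤ m) (hn : 8 * m ≤ n)
    (h11 : 1 ≤ e₁) (h12 : e₁ ≤ m) (h21 : 1 ≤ e₂) (h22 : e₂ ≤ m)
    (hp1 : Per v₁ m (n - m) e₁) (hp2 : Per v₂ m (n - m) e₂)
    (hpre : ∀ i < 4 * m, v₁ i = v₂ i)
    (hsuf : ∀ i, n - 4 * m ≤ i → i < n → v₁ i = v₂ i) :
    ∀ i < n, v₁ i = v₂ i := by
  have h1 : Per v₁ (2 * m) (4 * m) e₂ := by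
    intro x hx hxe
    rw [hpre x (by omega), hpre (x + e₂) (by omega)]
    exact hp2 x (by omega) (by omega)
  have h3 : Per v₁ (2 * m) (n - m) e₂ :=
    per_merge (x := 2 * m) (a := 2 * m) (le_refl _) (by omega) (by omega) h11 h1
      (hp1.mono (by omega) (le_refl _))
  intro i
  induction i using Nat.strong_induction_on with
  | _ i ih =>
    intro hi
    by_cases hc1 : i < 4 * m
    · exact hpre i hc1
    · by_cases hc2 : n - 4 * m ≤ i
      · exact hsuf i hc2 hi
      · push_neg at hc1 hc2
        have e1 : v₁ (i - e₂) = v₁ i := by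
          have := h3 (i - e₂) (by omega) (by omega)
          rwa [Nat.sub_add_cancel (by omega)] at this
        have e2 : v₂ (i - e₂) = v₂ i := by
          have := hp2 (i - e₂) (by omega) (by omega)
          rwa [Nat.sub_add_cancel (by omega)] at this
        rw [← e1, ← e2]
        exact ih (i - e₂) (by omega) (by omega)

end Periods

section Justin
variable {G : Type*} [Group G] {S : Set G} {f : G → ℕ}
variable (hS : S.Finite) (hSsym : ∀ s ∈ S, s⁻¹ ∈ S) (hSgen : Subgroup.closure S = ⊤)
  (hf : Set.InjOn f S)

def sphS (S : Set G) (n : ℕ) : Set G := {g : G | wordLength S g = n}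

include hS hSsym hSgen in
theorem sph_finite (n : ℕ) : (sphS S n).Finite :=
  (ball_finite hSsym hSgen hS n).subset (fun g hg => le_of_eq hg)

theorem getD_drop_take {w : List G} {p k t : ℕ} (ht : t < k) (hpk : p + k ≤ w.length) :
    ((w.drop p).take k).getD t 1 = w.getD (p + t) 1 := by
  have h1 : t < ((w.drop p).take k).length := by
    simp [List.length_take, List.length_drop]; omega
  have h2 : p + t < w.length := by omega
  rw [List.getD_eq_getElem _ _ h1, List.getD_eq_getElem _ _ h2]
  rw [List.getElem_take, List.getElem_drop]

theorem getD_take' {w : List G} {q t : ℕ} (ht : t < q) (hq : q ≤ w.length) :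
    (w.take q).getD t 1 = w.getD t 1 := by
  have h1 : t < (w.take q).length := by simp [List.length_take]; omega
  rw [List.getD_eq_getElem _ _ h1, List.getD_eq_getElem _ _ (by omega : t < w.length)]
  rw [List.getElem_take]

theorem getD_drop' {w : List G} {p t : ℕ} (hpt : p + t < w.length) :
    (w.drop p).getD t 1 = w.getD (p + t) 1 := by
  have h1 : t < (w.drop p).length := by simp [List.length_drop]; omega
  rw [List.getD_eq_getElem _ _ h1, List.getD_eq_getElem _ _ hpt, List.getElem_drop]

include hf in
theorem window_exists {g : G} {k m i : ℕ} (hσ : (sphS S k).ncard ≤ m)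
    (hin : i + k + m ≤ wordLength S g) :
    ∃ e, 1 ≤ e ∧ e ≤ m ∧
      Per (fun t => (NF S f hS hSsym hSgen g).getD t 1) (i + m) (i + k) e := by
  set w := NF S f hS hSsym hSgen g with hw
  obtain ⟨hw1, hw2, hw3⟩ := NF_spec (f := f) hS hSsym hSgen g
  rw [← hw] at hw1 hw2 hw3
  have hkey : ∀ j, j ≤ m → (w.drop (i+j)).take k = NF S f hS hSsym hSgen
      (((w.drop (i+j)).take k).prod) ∧ ((w.drop (i+j)).take k).prod ∈ sphS S k := by
    intro j hj
    have hd := NF_drop (f := f) hS hSsym hSgen g (i+j)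
    rw [← hw] at hd
    have ht := NF_take (f := f) hS hSsym hSgen hf ((w.drop (i+j)).prod) k
    rw [← hd] at ht
    have hlen : ((w.drop (i+j)).take k).length = k := by
      simp only [List.length_take, List.length_drop]
      omega
    refine ⟨ht, ?_⟩
    have := (NF_spec (f := f) hS hSsym hSgen (((w.drop (i+j)).take k).prod)).1
    rw [← ht, hlen] at this
    exact this.symm
  set T := (sph_finite hS hSsym hSgen (S := S) k).toFinset with hT
  have hTcard : T.card ≤ m := by
    have : (sphS S k).ncard = T.card := by
      rw [hT]
      exact Set.ncard_eq_toFinset_card _ _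
    omega
  have hmaps : ∀ j ∈ Finset.range (m+1), ((w.drop (i+j)).take k).prod ∈ T := by
    intro j hj
    rw [hT, Set.Finite.mem_toFinset]
    exact (hkey j (by simpa using Nat.lt_succ_iff.1 (Finset.mem_range.1 hj))).2
  obtain ⟨j₁, hj₁, j₂, hj₂, hne, heq⟩ :=
    Finset.exists_ne_map_eq_of_card_lt_of_maps_to
      (by rw [Finset.card_range]; omega) hmaps
  rw [Finset.mem_range] at hj₁ hj₂
  -- wlog j₁ < j₂
  rcases Nat.lt_or_ge j₁ j₂ with hlt | hge
  case inr =>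
    have hlt : j₂ < j₁ := by omega
    exact (by
      -- swap roles: redo with symmetry
      have heq' := heq.symm
      refine ⟨j₁ - j₂, by omega, by omega, ?_⟩
      intro x hx hxe
      have hfac : (w.drop (i+j₂)).take k = (w.drop (i+j₁)).take k := by
        have e1 := (hkey j₂ (by omega)).1
        have e2 := (hkey j₁ (by omega)).1
        rw [e1, e2, heq']
      have htx : x - (i + j₂) < k := by omega
      have g1 : w.getD x 1 = ((w.drop (i+j₂)).take k).getD (x - (i+j₂)) 1 := by
        rw [getD_drop_take htx (by omega)]
        congr 1; omega
      have g2 : ((w.drop (i+j₁)).take k).getD (x - (i+j₂)) 1 = w.getD (x + (j₁ - j₂)) 1 := by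
        rw [getD_drop_take htx (by omega)]
        congr 1; omega
      simp only []
      rw [g1, hfac, g2])
  case inl =>
    refine ⟨j₂ - j₁, by omega, by omega, ?_⟩
    intro x hx hxe
    have hfac : (w.drop (i+j₁)).take k = (w.drop (i+j₂)).take k := by
      have e1 := (hkey j₁ (by omega)).1
      have e2 := (hkey j₂ (by omega)).1
      rw [e1, e2, heq]
    have htx : x - (i + j₁) < k := by omega
    have g1 : w.getD x 1 = ((w.drop (i+j₁)).take k).getD (x - (i+j₁)) 1 := by
      rw [getD_drop_take htx (by omega)]
      congr 1; omega
    have g2 : ((w.drop (i+j₂)).take k).getD (x - (i+j₁)) 1 = w.getD (x + (j₂ - j₁)) 1 := by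
      rw [getD_drop_take htx (by omega)]
      congr 1; omega
    simp only []
    rw [g1, hfac, g2]

end Justin

section Justin2
variable {G : Type*} [Group G] {S : Set G} {f : G → ℕ}
variable (hS : S.Finite) (hSsym : ∀ s ∈ S, s⁻¹ ∈ S) (hSgen : Subgroup.closure S = ⊤)
  (hf : Set.InjOn f S)

include hf in
theorem word_period {g : G} {k m : ℕ} (hσ : (sphS S k).ncard ≤ m) (hm : 1 ≤ m)
    (h8 : 8*m ≤ k) (hn : 2*k ≤ wordLength S g) :
    ∃ e, 1 ≤ e ∧ e ≤ m ∧
      Per (fun t => (NF S f hS hSsym hSgen g).getD t 1) m (wordLength S g - m) e := by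
  obtain ⟨e₀, he1, he2, hp0⟩ := window_exists hS hSsym hSgen hf (g := g) (i := 0) hσ (by omega)
  rw [zero_add, zero_add] at hp0
  refine ⟨e₀, he1, he2, ?_⟩
  exact per_glue (by omega) hm (by omega)
    (fun i hi => window_exists hS hSsym hSgen hf hσ (by omega)) he1 he2 hp0

include hS hSsym hSgen hf in
theorem sph_le {k m n : ℕ} (hσ : (sphS S k).ncard ≤ m) (hm : 1 ≤ m) (h8 : 8*m ≤ k)
    (hn : 2*k ≤ n) :
    (sphS S n).ncard ≤
      {g : G | wordLength S g ≤ k}.ncard * {g : G | wordLength S g ≤ k}.ncard := by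
  classical
  set B := {g : G | wordLength S g ≤ k} with hB
  have hBfin : B.Finite := ball_finite hSsym hSgen hS k
  set Φ : G → G × G := fun g =>
    (((NF S f hS hSsym hSgen g).take (4*m)).prod,
     ((NF S f hS hSsym hSgen g).drop (n - 4*m)).prod) with hΦdef
  have hmaps : ∀ g ∈ sphS S n, Φ g ∈ B ×ˢ B := by
    intro g hg
    obtain ⟨hw1, hw2, hw3⟩ := NF_spec (f := f) hS hSsym hSgen g
    constructor
    · have := wl_le (S := S) (l := (NF S f hS hSsym hSgen g).take (4*m))
        (fun x hx => hw2 x (List.mem_of_mem_take hx)) rfl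
      have hlen : ((NF S f hS hSsym hSgen g).take (4*m)).length ≤ 4*m := by
        simp [List.length_take]
      simp only [hB, Set.mem_setOf_eq]
      show wordLength S (((NF S f hS hSsym hSgen g).take (4*m)).prod) ≤ k
      omega
    · have := wl_le (S := S) (l := (NF S f hS hSsym hSgen g).drop (n - 4*m))
        (fun x hx => hw2 x (List.mem_of_mem_drop hx)) rfl
      have hgn : wordLength S g = n := hg
      have hlen : ((NF S f hS hSsym hSgen g).drop (n - 4*m)).length ≤ 4*m := by
        simp only [List.length_drop, hw1, hgn]
        omega
      simp only [hB, Set.mem_setOf_eq]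
      show wordLength S (((NF S f hS hSsym hSgen g).drop (n - 4*m)).prod) ≤ k
      omega
  have hinj : Set.InjOn Φ (sphS S n) := by
    intro g₁ hg₁ g₂ hg₂ hΦ
    set w₁ := NF S f hS hSsym hSgen g₁ with hw₁d
    set w₂ := NF S f hS hSsym hSgen g₂ with hw₂d
    obtain ⟨ha1, ha2, ha3⟩ := NF_spec (f := f) hS hSsym hSgen g₁
    obtain ⟨hb1, hb2, hb3⟩ := NF_spec (f := f) hS hSsym hSgen g₂
    rw [← hw₁d] at ha1 ha2 ha3
    rw [← hw₂d] at hb1 hb2 hb3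
    have hn₁ : wordLength S g₁ = n := hg₁
    have hn₂ : wordLength S g₂ = n := hg₂
    have htake : w₁.take (4*m) = w₂.take (4*m) := by
      have t₁ := NF_take (f := f) hS hSsym hSgen hf g₁ (4*m)
      have t₂ := NF_take (f := f) hS hSsym hSgen hf g₂ (4*m)
      rw [← hw₁d] at t₁; rw [← hw₂d] at t₂
      rw [t₁, t₂]
      have : (w₁.take (4*m)).prod = (w₂.take (4*m)).prod := congrArg Prod.fst hΦ
      rw [this]
    have hdrop : w₁.drop (n - 4*m) = w₂.drop (n - 4*m) := by
      have t₁ := NF_drop (f := f) hS hSsym hSgen g₁ (n - 4*m)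
      have t₂ := NF_drop (f := f) hS hSsym hSgen g₂ (n - 4*m)
      rw [← hw₁d] at t₁; rw [← hw₂d] at t₂
      rw [t₁, t₂]
      have : (w₁.drop (n - 4*m)).prod = (w₂.drop (n - 4*m)).prod := congrArg Prod.snd hΦ
      rw [this]
    obtain ⟨e₁, he11, he12, hp₁⟩ :=
      word_period hS hSsym hSgen hf (g := g₁) hσ hm h8 (by omega)
    obtain ⟨e₂, he21, he22, hp₂⟩ :=
      word_period hS hSsym hSgen hf (g := g₂) hσ hm h8 (by omega)
    rw [← hw₁d, hn₁] at hp₁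
    rw [← hw₂d, hn₂] at hp₂
    have hagree : ∀ i < n, w₁.getD i 1 = w₂.getD i 1 := by
      apply per_encode hm (by omega) he11 he12 he21 he22 hp₁ hp₂
      · intro i hi
        have l₁ : w₁.getD i 1 = (w₁.take (4*m)).getD i 1 :=
          (getD_take' hi (by omega)).symm
        have l₂ : (w₂.take (4*m)).getD i 1 = w₂.getD i 1 :=
          getD_take' hi (by omega)
        rw [l₁, htake, l₂]
      · intro i h1 h2
        have l₁ : w₁.getD i 1 = (w₁.drop (n - 4*m)).getD (i - (n - 4*m)) 1 := by
          rw [getD_drop' (by omega)]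
          congr 1; omega
        have l₂ : (w₂.drop (n - 4*m)).getD (i - (n - 4*m)) 1 = w₂.getD i 1 := by
          rw [getD_drop' (by omega)]
          congr 1; omega
        rw [l₁, hdrop, l₂]
    have hww : w₁ = w₂ := by
      apply List.ext_getElem (by omega)
      intro i hi1 hi2
      have := hagree i (by omega)
      rwa [List.getD_eq_getElem _ _ hi1, List.getD_eq_getElem _ _ hi2] at this
    rw [← ha3, ← hb3, hww]
  have hle := Set.ncard_le_ncard_of_injOn Φ hmaps hinj (hBfin.prod hBfin)
  calc (sphS S n).ncard ≤ (B ×ˢ B).ncard := hle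
    _ = Nat.card (↑B × ↑B) := Nat.card_congr (Equiv.Set.prod B B)
    _ = Nat.card ↑B * Nat.card ↑B := Nat.card_prod _ _
    _ = B.ncard * B.ncard := rfl

end Justin2

section Growth
variable {G : Type*} [Group G] {S : Set G} {f : G → ℕ}
variable (hS : S.Finite) (hSsym : ∀ s ∈ S, s⁻¹ ∈ S) (hSgen : Subgroup.closure S = ⊤)
  (hf : Set.InjOn f S)

include hS hSsym hSgen in
theorem ball_split (n : ℕ) :
    {g : G | wordLength S g ≤ n + 1}.ncard
      = {g : G | wordLength S g ≤ n}.ncard + (sphS S (n+1)).ncard := by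
  have hU : {g : G | wordLength S g ≤ n + 1} = {g : G | wordLength S g ≤ n} ∪ sphS S (n+1) := by
    ext g
    simp only [Set.mem_setOf_eq, Set.mem_union, sphS]
    omega
  rw [hU]
  apply Set.ncard_union_eq
  · rw [Set.disjoint_left]
    intro g hg1 hg2
    have : wordLength S g = n + 1 := hg2
    have : wordLength S g ≤ n := hg1
    omega
  · exact ball_finite hSsym hSgen hS n
  · exact sph_finite hS hSsym hSgen (n+1)

include hS hSsym hSgen in
theorem ball_mono {a b : ℕ} (hab : a ≤ b) :
    {g : G | wordLength S g ≤ a}.ncard ≤ {g : G | wordLength S g ≤ b}.ncard :=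
  Set.ncard_le_ncard (fun g hg => le_trans hg hab) (ball_finite hSsym hSgen hS b)

include hS hSsym hSgen hf in
theorem linear_bound {k m : ℕ} (hσ : (sphS S k).ncard ≤ m) (hm : 1 ≤ m) (h8 : 8*m ≤ k) :
    ∀ n : ℕ, {g : G | wordLength S g ≤ n}.ncard ≤
      {g : G | wordLength S g ≤ 2*k}.ncard
        + n * ({g : G | wordLength S g ≤ k}.ncard * {g : G | wordLength S g ≤ k}.ncard) := by
  intro n
  induction n with
  | zero => simpa using ball_mono hS hSsym hSgen (Nat.zero_le (2*k))
  | succ n ih =>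
    by_cases hc : n + 1 ≤ 2*k
    · have := ball_mono hS hSsym hSgen hc (S := S)
      omega
    · push_neg at hc
      rw [ball_split hS hSsym hSgen n]
      have h2 := sph_le hS hSsym hSgen hf hσ hm h8 (n := n+1) (by omega)
      have h3 : (n+1) * ({g : G | wordLength S g ≤ k}.ncard * {g : G | wordLength S g ≤ k}.ncard)
          = n * ({g : G | wordLength S g ≤ k}.ncard * {g : G | wordLength S g ≤ k}.ncard)
            + {g : G | wordLength S g ≤ k}.ncard * {g : G | wordLength S g ≤ k}.ncard := by
        ring
      omega

include hS hSsym hSgen hf in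
theorem sphere_big
    (hgrowth : Tendsto (fun n : ℕ => (({g : G | wordLength S g ≤ n}.ncard : ℝ) / (n : ℝ)))
      atTop atTop) :
    ∀ k : ℕ, 1 ≤ k → k < 8 * (sphS S k).ncard := by
  have hinfG : Infinite G := by
    rw [← Set.infinite_univ_iff]
    by_contra hfin
    rw [Set.not_infinite] at hfin
    set N := (Set.univ : Set G).ncard with hN
    obtain ⟨n, hn1, hn2⟩ :=
      ((hgrowth.eventually_ge_atTop ((N : ℝ) + 1)).and (eventually_ge_atTop 1)).exists
    have hle : {g : G | wordLength S g ≤ n}.ncard ≤ N :=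
      Set.ncard_le_ncard (Set.subset_univ _) hfin
    have hn2' : (1 : ℝ) ≤ (n : ℝ) := by exact_mod_cast hn2
    have : (({g : G | wordLength S g ≤ n}.ncard : ℝ) / (n : ℝ)) ≤ N := by
      rw [div_le_iff₀ (by linarith)]
      calc ({g : G | wordLength S g ≤ n}.ncard : ℝ) ≤ N := by exact_mod_cast hle
        _ ≤ N * n := le_mul_of_one_le_right (by positivity) hn2'
    linarith
  intro k hk
  by_contra hcon
  push_neg at hcon
  set m := (sphS S k).ncard with hm
  have hm1 : 1 ≤ m := by
    show 0 < m
    rw [hm]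
    rw [Set.ncard_pos (sph_finite hS hSsym hSgen k)]
    obtain ⟨g, hg⟩ := exists_wl_eq hSsym hSgen hS hinfG k
    exact ⟨g, hg⟩
  have h8 : 8 * m ≤ k := hcon
  set A := {g : G | wordLength S g ≤ 2*k}.ncard with hA
  set B := {g : G | wordLength S g ≤ k}.ncard with hB
  obtain ⟨n, hn1, hn2⟩ :=
    ((hgrowth.eventually_ge_atTop ((A : ℝ) + (B*B : ℕ) + 1)).and (eventually_ge_atTop 1)).exists
  have hlin := linear_bound hS hSsym hSgen hf (le_refl m) hm1 h8 n
  rw [← hA, ← hB] at hlin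
  have hn2' : (1 : ℝ) ≤ (n : ℝ) := by exact_mod_cast hn2
  have hreal : (({g : G | wordLength S g ≤ n}.ncard : ℝ) / (n : ℝ)) ≤ (A : ℝ) + (B*B : ℕ) := by
    rw [div_le_iff₀ (by linarith)]
    calc ({g : G | wordLength S g ≤ n}.ncard : ℝ) ≤ (A : ℝ) + n * (B*B : ℕ) := by
          exact_mod_cast hlin
      _ ≤ (A : ℝ) * n + n * (B*B : ℕ) := by nlinarith [(by positivity : (0:ℝ) ≤ (A:ℝ))]
      _ = ((A : ℝ) + (B*B : ℕ)) * n := by ring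
  linarith

include hS hSsym hSgen hf in
theorem ball_quad
    (hgrowth : Tendsto (fun n : ℕ => (({g : G | wordLength S g ≤ n}.ncard : ℝ) / (n : ℝ)))
      atTop atTop) :
    ∀ n : ℕ, n * n ≤ 16 * {g : G | wordLength S g ≤ n}.ncard := by
  have hsb := sphere_big hS hSsym hSgen hf hgrowth
  intro n
  induction n with
  | zero => simp
  | succ n ih =>
    have h1 := ball_split hS hSsym hSgen (S := S) n
    have h2 := hsb (n+1) (by omega)
    have h3 : (n+1)*(n+1) = n*n + 2*n + 1 := by ring
    omega

end Growth

section Tree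

theorem cross_lemma {Z : Type*} {Q : Z → Z → Prop} {T : Finset Z} {a b : Z}
    (hch : Relation.ReflTransGen Q a b) (hb : b ∉ T) :
    a ∈ T → ∃ p q, p ∈ T ∧ q ∉ T ∧ Q p q := by
  induction hch using Relation.ReflTransGen.head_induction_on with
  | refl => intro ha; exact absurd ha hb
  | head h h' ih =>
    rename_i p c
    intro ha
    by_cases hc : c ∈ T
    · exact ih hc
    · exact ⟨p, c, ha, hc, h⟩

theorem exists_tree {Z : Type*} (R : Z → Z → Prop) (V : Finset Z) (hne : V.Nonempty)
    (hcon : ∀ u ∈ V, ∀ v ∈ V,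
      Relation.ReflTransGen (fun a b => a ∈ V ∧ b ∈ V ∧ R a b) u v) :
    ∃ E : Finset (Z × Z), (∀ e ∈ E, e.1 ∈ V ∧ e.2 ∈ V ∧ R e.1 e.2) ∧
      E.card + 1 ≤ V.card ∧ ∀ u ∈ V, ∀ v ∈ V, Relation.ReflTransGen (edgeStep E) u v := by
  classical
  obtain ⟨v₀, hv₀⟩ := hne
  set Good : Finset Z → Finset (Z × Z) → Prop := fun T E =>
    (∀ e ∈ E, e.1 ∈ T ∧ e.2 ∈ T ∧ R e.1 e.2) ∧
      E.card + 1 ≤ T.card ∧ ∀ u ∈ T, ∀ v ∈ T, Relation.ReflTransGen (edgeStep E) u v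
    with hGood
  set C : Finset (Finset Z) := V.powerset.filter (fun T => v₀ ∈ T ∧ ∃ E, Good T E) with hC
  have hCne : C.Nonempty := by
    refine ⟨{v₀}, ?_⟩
    rw [hC, Finset.mem_filter]
    refine ⟨Finset.mem_powerset.2 (Finset.singleton_subset_iff.2 hv₀),
      Finset.mem_singleton_self v₀, ∅, ?_, ?_, ?_⟩
    · intro e he; simp at he
    · simp
    · intro u hu v hv
      rw [Finset.mem_singleton] at hu hv
      rw [hu, hv]
  obtain ⟨T, hTC, hTmax⟩ := Finset.exists_max_image C Finset.card hCne
  rw [hC, Finset.mem_filter, Finset.mem_powerset] at hTC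
  obtain ⟨hTV, hv₀T, E, hE1, hE2, hE3⟩ := hTC
  have hTeqV : T = V := by
    by_contra hneq
    have hssub : ∃ x ∈ V, x ∉ T := by
      by_contra hc
      push_neg at hc
      exact hneq (Finset.Subset.antisymm hTV hc)
    obtain ⟨x, hxV, hxT⟩ := hssub
    obtain ⟨p, q, hpT, hqT, hpq⟩ :=
      cross_lemma (hcon v₀ (hTV hv₀T) x hxV) hxT hv₀T
    obtain ⟨hpV, hqV, hR⟩ := hpq
    set T' := insert q T with hT'
    set E' := insert (p, q) E with hE'
    have hmem : T' ∈ C := by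
      rw [hC, Finset.mem_filter, Finset.mem_powerset]
      refine ⟨Finset.insert_subset hqV hTV, Finset.mem_insert_of_mem hv₀T, E', ?_, ?_, ?_⟩
      · intro e he
        rcases Finset.mem_insert.1 he with rfl | he
        · exact ⟨Finset.mem_insert_of_mem hpT, Finset.mem_insert_self _ _, hR⟩
        · obtain ⟨h1, h2, h3⟩ := hE1 e he
          exact ⟨Finset.mem_insert_of_mem h1, Finset.mem_insert_of_mem h2, h3⟩
      · have h1 : E'.card ≤ E.card + 1 := Finset.card_insert_le _ _
        have h2 : T'.card = T.card + 1 := Finset.card_insert_of_notMem hqT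
        omega
      · have hmono : ∀ {a b : Z}, Relation.ReflTransGen (edgeStep E) a b →
            Relation.ReflTransGen (edgeStep E') a b := by
          intro a b h
          refine Relation.ReflTransGen.mono ?_ a b h
          intro a b hab
          rcases hab with h | h
          exacts [Or.inl (Finset.mem_insert_of_mem h), Or.inr (Finset.mem_insert_of_mem h)]
        have hqp : Relation.ReflTransGen (edgeStep E') q p :=
          Relation.ReflTransGen.single (Or.inr (Finset.mem_insert_self _ _))
        have hpq' : Relation.ReflTransGen (edgeStep E') p q :=
          Relation.ReflTransGen.single (Or.inl (Finset.mem_insert_self _ _))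
        intro u hu v hv
        rcases Finset.mem_insert.1 hu with rfl | hu'
        · rcases Finset.mem_insert.1 hv with rfl | hv'
          · exact Relation.ReflTransGen.refl
          · exact hqp.trans (hmono (hE3 p hpT v hv'))
        · rcases Finset.mem_insert.1 hv with rfl | hv'
          · exact (hmono (hE3 u hu' p hpT)).trans hpq'
          · exact hmono (hE3 u hu' v hv')
    have hcard := hTmax T' hmem
    have : T'.card = T.card + 1 := Finset.card_insert_of_notMem hqT
    omega
  subst hTeqV
  exact ⟨E, hE1, hE2, hE3⟩

end Tree

section Net
variable {G : Type*} [Group G] {S : Set G}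
variable (hS : S.Finite) (hSsym : ∀ s ∈ S, s⁻¹ ∈ S) (hSgen : Subgroup.closure S = ⊤)

include hSsym hSgen in
theorem exists_net {F : Set G} (hF : F.Finite) (ρ : ℕ) :
    ∃ V : Finset G, (↑V ⊆ F) ∧
      (∀ u ∈ V, ∀ v ∈ V, u ≠ v → 2*ρ < wordDist S u v) ∧
      (∀ a ∈ F, ∃ v ∈ V, wordDist S a v ≤ 2*ρ) := by
  classical
  set Sep : Finset G → Prop := fun V => ∀ u ∈ V, ∀ v ∈ V, u ≠ v → 2*ρ < wordDist S u v
    with hSep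
  set C : Finset (Finset G) := hF.toFinset.powerset.filter Sep with hC
  have hCne : C.Nonempty := ⟨∅, by
    rw [hC, Finset.mem_filter]
    exact ⟨Finset.empty_mem_powerset _, by intro u hu; simp at hu⟩⟩
  obtain ⟨V, hVC, hVmax⟩ := Finset.exists_max_image C Finset.card hCne
  rw [hC, Finset.mem_filter, Finset.mem_powerset] at hVC
  obtain ⟨hVF, hVsep⟩ := hVC
  have hVF' : ↑V ⊆ F := by
    intro x hx
    have := hVF hx
    rwa [Set.Finite.mem_toFinset] at this
  refine ⟨V, hVF', hVsep, ?_⟩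
  intro a ha
  by_contra hcon
  push_neg at hcon
  have haV : a ∉ V := by
    intro haV
    have := hcon a haV
    simp [wordDist] at this
  have hmem : insert a V ∈ C := by
    rw [hC, Finset.mem_filter, Finset.mem_powerset]
    constructor
    · exact Finset.insert_subset (by rwa [Set.Finite.mem_toFinset]) hVF
    · intro u hu v hv huv
      rcases Finset.mem_insert.1 hu with rfl | hu'
      · rcases Finset.mem_insert.1 hv with rfl | hv'
        · exact absurd rfl huv
        · exact hcon v hv'
      · rcases Finset.mem_insert.1 hv with rfl | hv'
        · rw [wd_comm hSsym hSgen]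
          exact hcon u hu'
        · exact hVsep u hu' v hv' huv
  have h1 := hVmax _ hmem
  have h2 : (insert a V).card = V.card + 1 := Finset.card_insert_of_notMem haV
  omega

include hS hSsym hSgen in
theorem net_count {F : Set G} (hF : F.Finite) {V : Finset G} {ρ : ℕ} (hVF : ↑V ⊆ F)
    (hsep : ∀ u ∈ V, ∀ v ∈ V, u ≠ v → 2*ρ < wordDist S u v) :
    V.card * {g : G | wordLength S g ≤ ρ}.ncard ≤ ({g : G | wordLength S g ≤ ρ} * F).ncard := by
  classical
  set Bfin : Finset G := (ball_finite hSsym hSgen hS ρ).toFinset with hBfin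
  set U : Finset G := V.biUnion (fun v => Bfin.image (· * v)) with hU
  have hdisj : ∀ u ∈ V, ∀ v ∈ V, u ≠ v →
      Disjoint (Bfin.image (· * u)) (Bfin.image (· * v)) := by
    intro u hu v hv huv
    rw [Finset.disjoint_left]
    intro x hx1 hx2
    obtain ⟨b₁, hb₁, he₁⟩ := Finset.mem_image.1 hx1
    obtain ⟨b₂, hb₂, he₂⟩ := Finset.mem_image.1 hx2
    rw [Set.Finite.mem_toFinset] at hb₁ hb₂
    have hd1 : wordDist S x u ≤ ρ := by
      rw [wordDist, ← he₁]
      simpa using hb₁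
    have hd2 : wordDist S x v ≤ ρ := by
      rw [wordDist, ← he₂]
      simpa using hb₂
    have htri := wd_triangle hSsym hSgen u x v
    rw [wd_comm hSsym hSgen u x] at htri
    have := hsep u hu v hv huv
    omega
  have hcard : U.card = V.card * Bfin.card := by
    rw [hU, Finset.card_biUnion hdisj]
    have : ∀ v ∈ V, (Bfin.image (· * v)).card = Bfin.card := by
      intro v _
      exact Finset.card_image_of_injective _ (fun a b hab => by
        simpa using mul_right_cancel hab)
    rw [Finset.sum_congr rfl this, Finset.sum_const, smul_eq_mul]
  have hBFfin : ({g : G | wordLength S g ≤ ρ} * F).Finite :=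
    Set.Finite.mul (ball_finite hSsym hSgen hS ρ) hF
  have hsub : U ⊆ hBFfin.toFinset := by
    intro x hx
    rw [Set.Finite.mem_toFinset]
    obtain ⟨v, hv, hx2⟩ := Finset.mem_biUnion.1 hx
    obtain ⟨b, hb, he⟩ := Finset.mem_image.1 hx2
    rw [Set.Finite.mem_toFinset] at hb
    rw [← he]
    exact Set.mul_mem_mul hb (hVF hv)
  have h1 := Finset.card_le_card hsub
  rw [hcard] at h1
  have h2 : hBFfin.toFinset.card = ({g : G | wordLength S g ≤ ρ} * F).ncard :=
    (Set.ncard_eq_toFinset_card _ hBFfin).symm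
  have h3 : Bfin.card = {g : G | wordLength S g ≤ ρ}.ncard :=
    (Set.ncard_eq_toFinset_card _ _).symm
  rw [h3] at h1
  rw [h2] at h1
  exact h1

include hSsym hSgen in
theorem net_conn {F : Set G} {V : Finset G} {ρ : ℕ} (hρ : 1 ≤ ρ)
    (hVF : ↑V ⊆ F)
    (hdense : ∀ a ∈ F, ∃ v ∈ V, wordDist S a v ≤ 2*ρ)
    (hFconn : ∀ g ∈ F, ∀ h ∈ F, Relation.ReflTransGen
      (fun a b => a ∈ F ∧ b ∈ F ∧ (wordDist S a b : ℝ) ≤ 1) g h) :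
    ∀ u ∈ V, ∀ v ∈ V, Relation.ReflTransGen
      (fun a b => a ∈ V ∧ b ∈ V ∧ wordDist S a b ≤ 4*ρ+1) u v := by
  have main : ∀ x y : G, Relation.ReflTransGen
      (fun a b => a ∈ F ∧ b ∈ F ∧ (wordDist S a b : ℝ) ≤ 1) x y →
      ∀ v ∈ V, wordDist S y v ≤ 2*ρ →
      ∀ u ∈ V, wordDist S x u ≤ 2*ρ →
      Relation.ReflTransGen (fun a b => a ∈ V ∧ b ∈ V ∧ wordDist S a b ≤ 4*ρ+1) u v := by
    intro x y hch
    induction hch using Relation.ReflTransGen.head_induction_on with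
    | refl =>
      intro v hv hyv u hu hyu
      apply Relation.ReflTransGen.single
      refine ⟨hu, hv, ?_⟩
      have h1 := wd_triangle hSsym hSgen u y v
      have h2 : wordDist S u y = wordDist S y u := wd_comm hSsym hSgen u y
      omega
    | head hstep hch ih =>
      rename_i x x'
      intro v hv hyv u hu hxu
      obtain ⟨hxF, hx'F, hstep1⟩ := hstep
      have hstep1' : wordDist S x x' ≤ 1 := by exact_mod_cast hstep1
      obtain ⟨u', hu', hx'u'⟩ := hdense x' hx'F
      have hstepV : u ∈ V ∧ u' ∈ V ∧ wordDist S u u' ≤ 4*ρ+1 := by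
        refine ⟨hu, hu', ?_⟩
        have h1 := wd_triangle hSsym hSgen u x u'
        have h2 := wd_triangle hSsym hSgen x x' u'
        have h3 : wordDist S u x = wordDist S x u := wd_comm hSsym hSgen u x
        omega
      exact Relation.ReflTransGen.head hstepV (ih v hv hyv u' hu' hx'u')
  intro u hu v hv
  exact main u v (hFconn u (hVF hu) v (hVF hv)) v hv (by simp [wordDist]) u hu
    (by simp [wordDist])
end Net


theorem stmt13 {G : Type*} [Group G] (S : Set G) (hSfin : S.Finite)
    (hSsym : ∀ s ∈ S, s⁻¹ ∈ S) (hSgen : Subgroup.closure S = ⊤)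
    -- super-linear growth
    (hgrowth : Tendsto (fun n : ℕ => (((wordBall S n).ncard : ℝ) / (n : ℝ))) atTop atTop) :
    ∃ c : ℝ, ∀ r : ℝ, 1 ≤ r → ∀ F : Set G,
      IsFolner S 1 r F → RConnected S 1 F →
      ∀ A : Set G, A ⊆ F → A.Nonempty →
      -- there is a connected graph (V, E) with V finite, (4r)-dense in A,
      -- of d_G-weight at most c|F|/r
      ∃ (V : Finset G) (E : Finset (G × G)),
        (∀ e ∈ E, e.1 ∈ V ∧ e.2 ∈ V) ∧
        (∀ a ∈ A, ∃ v ∈ V, (wordDist S a v : ℝ) ≤ 4 * r) ∧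
        (∀ u ∈ V, ∀ v ∈ V, Relation.ReflTransGen (edgeStep E) u v) ∧
        (∑ e ∈ E, (wordDist S e.1 e.2 : ℝ)) ≤ c * (F.ncard : ℝ) / r := by
  classical
  obtain ⟨f, hf⟩ : ∃ f : G → ℕ, Set.InjOn f S := by
    refine ⟨fun g => if h : g ∈ hSfin.toFinset then
      ((hSfin.toFinset.equivFin ⟨g, h⟩ : Fin _) : ℕ) else 0, ?_⟩
    intro u hu v hv huv
    have hu' : u ∈ hSfin.toFinset := by rwa [Set.Finite.mem_toFinset]
    have hv' : v ∈ hSfin.toFinset := by rwa [Set.Finite.mem_toFinset]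
    simp only [dif_pos hu', dif_pos hv'] at huv
    have h2 : hSfin.toFinset.equivFin ⟨u, hu'⟩ = hSfin.toFinset.equivFin ⟨v, hv'⟩ :=
      Fin.ext huv
    have h3 := hSfin.toFinset.equivFin.injective h2
    exact congrArg Subtype.val h3
  have hball : ∀ n : ℕ, wordBall S (n : ℝ) = {g : G | wordLength S g ≤ n} := by
    intro n
    rw [wordBall_eq (n : ℝ) (by positivity)]
    simp
  have hg2 : Tendsto (fun n : ℕ => (({g : G | wordLength S g ≤ n}.ncard : ℝ) / (n : ℝ)))
      atTop atTop := by
    apply hgrowth.congr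
    intro n
    rw [hball n]
  have hquad := ball_quad hSfin hSsym hSgen hf hg2
  refine ⟨320, ?_⟩
  intro r hr F hFol hFconn A hA hAne
  obtain ⟨hFfin, hFne, hFol3⟩ := hFol
  set ρ := ⌊r⌋₊ with hρdef
  have hr0 : (0:ℝ) ≤ r := by linarith
  have hρ1 : 1 ≤ ρ := Nat.le_floor (by exact_mod_cast hr)
  have hρr : (ρ : ℝ) ≤ r := Nat.floor_le hr0
  have hρhalf : r / 2 ≤ (ρ : ℝ) := by
    have h1 : r < ρ + 1 := Nat.lt_floor_add_one r
    have h2 : (1:ℝ) ≤ (ρ:ℝ) := by exact_mod_cast hρ1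
    by_cases hc : r ≤ 2
    · linarith
    · linarith
  obtain ⟨V, hVF, hVsep, hVdense⟩ := exists_net hSsym hSgen hFfin ρ
  have hVne : V.Nonempty := by
    obtain ⟨a, ha⟩ := hFne
    obtain ⟨v, hv, -⟩ := hVdense a ha
    exact ⟨v, hv⟩
  have hcount := net_count hSfin hSsym hSgen hFfin hVF hVsep
  have hballr : wordBall S r = {g : G | wordLength S g ≤ ρ} := wordBall_eq r hr0
  rw [hballr] at hFol3
  have hBFfin : ({g : G | wordLength S g ≤ ρ} * F).Finite :=
    (ball_finite hSsym hSgen hSfin ρ).mul hFfin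
  have hFsub : F ⊆ {g : G | wordLength S g ≤ ρ} * F := by
    intro x hx
    have h1 : (1:G) ∈ {g : G | wordLength S g ≤ ρ} := by
      simp only [Set.mem_setOf_eq, wl_one]
      omega
    have := Set.mul_mem_mul h1 hx
    simpa using this
  have hBF2 : (({g : G | wordLength S g ≤ ρ} * F).ncard : ℝ) ≤ 2 * (F.ncard : ℝ) := by
    have hsplit : {g : G | wordLength S g ≤ ρ} * F
        = F ∪ (({g : G | wordLength S g ≤ ρ} * F) \ F) := (Set.union_diff_cancel hFsub).symm
    have hle : ({g : G | wordLength S g ≤ ρ} * F).ncard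
        ≤ F.ncard + (({g : G | wordLength S g ≤ ρ} * F) \ F).ncard := by
      have h0 := Set.ncard_union_le F (({g : G | wordLength S g ≤ ρ} * F) \ F)
      rw [← hsplit] at h0
      exact h0
    have hcast : (({g : G | wordLength S g ≤ ρ} * F).ncard : ℝ)
        ≤ (F.ncard : ℝ) + ((({g : G | wordLength S g ≤ ρ} * F) \ F).ncard : ℝ) := by
      exact_mod_cast hle
    linarith [hFol3]
  have hconnV := net_conn hSsym hSgen hρ1 hVF hVdense hFconn
  obtain ⟨E, hE1, hE2, hE3⟩ :=
    exists_tree (fun a b => wordDist S a b ≤ 4*ρ+1) V hVne hconnV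
  refine ⟨V, E, fun e he => ⟨(hE1 e he).1, (hE1 e he).2.1⟩, ?_, hE3, ?_⟩
  · intro a haA
    obtain ⟨v, hv, hdist⟩ := hVdense a (hA haA)
    refine ⟨v, hv, ?_⟩
    have h1 : (wordDist S a v : ℝ) ≤ 2*(ρ:ℝ) := by exact_mod_cast hdist
    linarith
  · set W := ∑ e ∈ E, (wordDist S e.1 e.2 : ℝ) with hW
    have hW0 : 0 ≤ W := Finset.sum_nonneg (fun e _ => by positivity)
    have hWle : W ≤ (E.card : ℝ) * (4*(ρ:ℝ)+1) := by
      rw [hW]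
      calc ∑ e ∈ E, (wordDist S e.1 e.2 : ℝ) ≤ ∑ _e ∈ E, (4*(ρ:ℝ)+1) :=
            Finset.sum_le_sum (fun e he => by
              have := (hE1 e he).2.2
              push_cast
              exact_mod_cast this)
        _ = (E.card : ℝ) * (4*(ρ:ℝ)+1) := by rw [Finset.sum_const, nsmul_eq_mul]
    have hEV : (E.card : ℝ) ≤ (V.card : ℝ) := by
      have := hE2
      exact_mod_cast Nat.le_of_succ_le this
    have hVcard : (V.card : ℝ) * ({g : G | wordLength S g ≤ ρ}.ncard : ℝ)
        ≤ 2 * (F.ncard : ℝ) := by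
      have h1 : ((V.card * {g : G | wordLength S g ≤ ρ}.ncard : ℕ) : ℝ)
          ≤ (({g : G | wordLength S g ≤ ρ} * F).ncard : ℝ) := by exact_mod_cast hcount
      push_cast at h1
      linarith
    have hquadρ : ((ρ:ℝ) * (ρ:ℝ)) ≤ 16 * ({g : G | wordLength S g ≤ ρ}.ncard : ℝ) := by
      exact_mod_cast hquad ρ
    have hρ0 : (0:ℝ) ≤ (ρ:ℝ) := by positivity
    have hVc0 : (0:ℝ) ≤ (V.card : ℝ) := by positivity
    have hρ1' : (1:ℝ) ≤ (ρ:ℝ) := by exact_mod_cast hρ1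
    have hWV : W ≤ (V.card : ℝ) * (5*(ρ:ℝ)) := by
      calc W ≤ (E.card : ℝ) * (4*(ρ:ℝ)+1) := hWle
        _ ≤ (V.card : ℝ) * (4*(ρ:ℝ)+1) :=
            mul_le_mul_of_nonneg_right hEV (by linarith)
        _ ≤ (V.card : ℝ) * (5*(ρ:ℝ)) :=
            mul_le_mul_of_nonneg_left (by linarith) hVc0
    have hWρ : W * (ρ:ℝ) ≤ 160 * (F.ncard : ℝ) := by
      have step1 : W * (ρ:ℝ) ≤ ((V.card : ℝ) * (5*(ρ:ℝ))) * (ρ:ℝ) :=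
        mul_le_mul_of_nonneg_right hWV hρ0
      have step2 : ((V.card : ℝ) * (5*(ρ:ℝ))) * (ρ:ℝ)
          = 5 * (V.card : ℝ) * ((ρ:ℝ) * (ρ:ℝ)) := by ring
      have step3 : 5 * (V.card : ℝ) * ((ρ:ℝ) * (ρ:ℝ))
          ≤ 5 * (V.card : ℝ) * (16 * ({g : G | wordLength S g ≤ ρ}.ncard : ℝ)) :=
        mul_le_mul_of_nonneg_left hquadρ (by positivity)
      have step4 : 5 * (V.card : ℝ) * (16 * ({g : G | wordLength S g ≤ ρ}.ncard : ℝ))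
          = 80 * ((V.card : ℝ) * ({g : G | wordLength S g ≤ ρ}.ncard : ℝ)) := by ring
      have step5 : 80 * ((V.card : ℝ) * ({g : G | wordLength S g ≤ ρ}.ncard : ℝ))
          ≤ 80 * (2 * (F.ncard : ℝ)) :=
        mul_le_mul_of_nonneg_left hVcard (by norm_num)
      linarith
    rw [le_div_iff₀ (by linarith : (0:ℝ) < r)]
    have hr2ρ : r ≤ 2 * (ρ:ℝ) := by linarith
    have : W * r ≤ W * (2*(ρ:ℝ)) := mul_le_mul_of_nonneg_left hr2ρ hW0
    linarith
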